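/- arXiv:2310.02922 — 2 statements merged into one kernel-verified Lean document; each statement's English description precedes it below -/
import Mathlib

section
/- For any density matrix ϱ on n qubits and a 2-colorable graph state |G⟩ with color classes S_1, S_2, the fidelity F = ⟨G|ϱ|G⟩ satisfies F ≥ 1/2 − (1/2)·Tr(W^{(2)} ϱ), where W^{(2)} = 3I − 2[∏_{i∈S_1}((g_i+I)/2) + ∏_{i∈S_2}((g_i+I)/2)]. -/
open Matrix BigOperators
open scoped ComplexOrder

noncomputable section

/-- Single-qubit Pauli X matrix. -/
def pauliX : Matrix (Fin 2) (Fin 2) ℂ := !![0, 1; 1, 0]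

/-- Single-qubit Pauli Z matrix. -/
def pauliZ : Matrix (Fin 2) (Fin 2) ℂ := !![1, 0; 0, -1]

/-- The operator acting as the single-qubit matrix `A` on qubit `i` and as the
identity on all other qubits. -/
def localOp {n : ℕ} (A : Matrix (Fin 2) (Fin 2) ℂ) (i : Fin n) :
    Matrix (Fin n → Fin 2) (Fin n → Fin 2) ℂ :=
  fun f g => A (f i) (g i) * ∏ j ∈ Finset.univ.erase i, if f j = g j then (1 : ℂ) else 0

/-- The product `∏_{k ∈ s} Z_k` of (commuting, diagonal) Pauli-Z operators on the
qubits in `s`. -/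
def zProd {n : ℕ} (s : Finset (Fin n)) : Matrix (Fin n → Fin 2) (Fin n → Fin 2) ℂ :=
  Matrix.diagonal fun f => ∏ k ∈ s, if f k = 1 then (-1 : ℂ) else 1

/-- The edge set of `G`, each edge listed once as an ordered pair `(i, j)` with `i < j`. -/
def edgePairs {n : ℕ} (G : SimpleGraph (Fin n)) [DecidableRel G.Adj] :
    Finset (Fin n × Fin n) :=
  Finset.univ.filter fun p => p.1 < p.2 ∧ G.Adj p.1 p.2

/-- The product `∏_{(i,j) ∈ E} CZ_{ij}` of the (commuting, diagonal) controlled-Z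
gates `CZ_{ij} = |0⟩⟨0| ⊗ I + |1⟩⟨1| ⊗ Z` over all edges of `G`. -/
def czProd {n : ℕ} (G : SimpleGraph (Fin n)) [DecidableRel G.Adj] :
    Matrix (Fin n → Fin 2) (Fin n → Fin 2) ℂ :=
  Matrix.diagonal fun f =>
    ∏ p ∈ edgePairs G, if f p.1 = 1 ∧ f p.2 = 1 then (-1 : ℂ) else 1

/-- The state `|+⟩^{⊗ n}` with `|+⟩ = (|0⟩ + |1⟩)/√2`. -/
def plusState (n : ℕ) : (Fin n → Fin 2) → ℂ := fun _ => ((Real.sqrt 2 : ℂ))⁻¹ ^ n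

/-- The graph state `|G⟩ = (∏_{(i,j) ∈ E} CZ_{ij}) |+⟩^{⊗ n}`. -/
def graphState {n : ℕ} (G : SimpleGraph (Fin n)) [DecidableRel G.Adj] :
    (Fin n → Fin 2) → ℂ :=
  (czProd G).mulVec (plusState n)

/-- The stabilizer generator `g_i = X_i ∏_{k ∈ N(i)} Z_k` of the graph state. -/
def gOp {n : ℕ} (G : SimpleGraph (Fin n)) [DecidableRel G.Adj] (i : Fin n) :
    Matrix (Fin n → Fin 2) (Fin n → Fin 2) ℂ :=
  localOp pauliX i * zProd (G.neighborFinset i)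

/-- The projector `(g_i + I)/2` onto the +1 eigenspace of the stabilizer `g_i`. -/
def stabProj {n : ℕ} (G : SimpleGraph (Fin n)) [DecidableRel G.Adj] (i : Fin n) :
    Matrix (Fin n → Fin 2) (Fin n → Fin 2) ℂ :=
  (2 : ℂ)⁻¹ • (gOp G i + 1)

lemma fin2_cases (a : Fin 2) : a = 0 ∨ a = 1 := by
  match a with
  | 0 => exact Or.inl rfl
  | 1 => exact Or.inr rfl

def tensorAll {n : ℕ} (m : Fin n → Matrix (Fin 2) (Fin 2) ℂ) :
    Matrix (Fin n → Fin 2) (Fin n → Fin 2) ℂ :=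
  Matrix.of fun f g => ∏ j, m j (f j) (g j)

lemma tensorAll_mul {n : ℕ} (m m' : Fin n → Matrix (Fin 2) (Fin 2) ℂ) :
    tensorAll m * tensorAll m' = tensorAll (fun j => m j * m' j) := by
  ext f g
  simp only [tensorAll, Matrix.mul_apply, Matrix.of_apply]
  rw [Finset.prod_univ_sum]
  rw [show (Fintype.piFinset fun _ : Fin n => (Finset.univ : Finset (Fin 2))) = Finset.univ by
    ext x; simp]
  apply Finset.sum_congr rfl
  intro x _
  rw [← Finset.prod_mul_distrib]

lemma tensorAll_one {n : ℕ} : tensorAll (fun _ : Fin n => (1 : Matrix (Fin 2) (Fin 2) ℂ)) = 1 := by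
  ext f g
  simp only [tensorAll, Matrix.of_apply, Matrix.one_apply]
  by_cases h : f = g
  · subst h; simp
  · rw [if_neg h]
    obtain ⟨j, hj⟩ := Function.ne_iff.mp h
    exact Finset.prod_eq_zero (Finset.mem_univ j) (Matrix.one_apply_ne hj)

lemma localOp_eq_tensorAll {n : ℕ} (A : Matrix (Fin 2) (Fin 2) ℂ) (i : Fin n) :
    localOp A i = tensorAll (fun j => if j = i then A else 1) := by
  ext f g
  simp only [localOp, tensorAll, Matrix.of_apply]
  rw [← Finset.prod_erase_mul _ _ (Finset.mem_univ i)]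
  rw [if_pos rfl, mul_comm]
  congr 1
  apply Finset.prod_congr rfl
  intro j hj
  rw [if_neg (Finset.mem_erase.mp hj).1, Matrix.one_apply]

lemma zProd_eq_tensorAll {n : ℕ} (s : Finset (Fin n)) :
    zProd s = tensorAll (fun j => if j ∈ s then pauliZ else 1) := by
  ext f g
  simp only [zProd, tensorAll, Matrix.of_apply, Matrix.diagonal_apply]
  by_cases h : f = g
  · subst h
    rw [if_pos rfl]
    rw [← Finset.prod_subset (Finset.subset_univ s) (fun j _ hj => by
      rw [if_neg hj, Matrix.one_apply_eq])]
    apply Finset.prod_congr rfl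
    intro j hj
    rw [if_pos hj]
    rcases fin2_cases (f j) with h2 | h2 <;> rw [h2] <;> simp [pauliZ]
  · rw [if_neg h]
    obtain ⟨j, hj⟩ := Function.ne_iff.mp h
    refine (Finset.prod_eq_zero (Finset.mem_univ j) ?_).symm
    by_cases hmem : j ∈ s
    · rw [if_pos hmem]
      rcases fin2_cases (f j) with h2 | h2 <;> rcases fin2_cases (g j) with h3 | h3 <;>
        simp_all [pauliZ]
    · rw [if_neg hmem]
      exact Matrix.one_apply_ne hj

def Hmat : Matrix (Fin 2) (Fin 2) ℂ := ((Real.sqrt 2 : ℂ))⁻¹ • !![1, 1; 1, -1]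

lemma sqrt2_sq : ((Real.sqrt 2 : ℝ) : ℂ) * ((Real.sqrt 2 : ℝ) : ℂ) = 2 := by
  norm_cast
  rw [Real.mul_self_sqrt] <;> norm_num

lemma sqrt2_ne : ((Real.sqrt 2 : ℝ) : ℂ) ≠ 0 := by
  intro h
  have := sqrt2_sq
  rw [h] at this
  norm_num at this

lemma Hmat_mul_Hmat : Hmat * Hmat = 1 := by
  ext i j
  fin_cases i <;> fin_cases j <;>
    simp [Hmat, Matrix.mul_apply, Fin.sum_univ_two, Matrix.one_apply] <;>
    field_simp <;> (try norm_num) <;> rw [← sqrt2_sq] <;> ring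

lemma Hmat_mul_Z : Hmat * pauliZ = pauliX * Hmat := by
  ext i j
  fin_cases i <;> fin_cases j <;>
    simp [Hmat, pauliZ, pauliX, Matrix.mul_apply, Fin.sum_univ_two]

lemma Hmat_conjTranspose : Hmatᴴ = Hmat := by
  ext i j
  fin_cases i <;> fin_cases j <;>
    simp [Hmat, Matrix.conjTranspose_apply]

def Hn (n : ℕ) : Matrix (Fin n → Fin 2) (Fin n → Fin 2) ℂ := tensorAll (fun _ => Hmat)

lemma tensorAll_conjTranspose {n : ℕ} (m : Fin n → Matrix (Fin 2) (Fin 2) ℂ) :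
    (tensorAll m)ᴴ = tensorAll (fun j => (m j)ᴴ) := by
  ext f g
  simp only [tensorAll, Matrix.conjTranspose_apply, Matrix.of_apply]
  exact map_prod (starRingEnd ℂ) (fun j => m j (g j) (f j)) Finset.univ

lemma Hn_mul_Hn {n : ℕ} : Hn n * Hn n = 1 := by
  rw [Hn, tensorAll_mul]
  simp only [Hmat_mul_Hmat]
  exact tensorAll_one

lemma Hn_conjTranspose {n : ℕ} : (Hn n)ᴴ = Hn n := by
  rw [Hn, tensorAll_conjTranspose]
  simp only [Hmat_conjTranspose]

def cfun {n : ℕ} (G : SimpleGraph (Fin n)) [DecidableRel G.Adj] : (Fin n → Fin 2) → ℂ :=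
  fun f => ∏ p ∈ edgePairs G, if f p.1 = 1 ∧ f p.2 = 1 then (-1 : ℂ) else 1

lemma czProd_eq {n : ℕ} (G : SimpleGraph (Fin n)) [DecidableRel G.Adj] :
    czProd G = Matrix.diagonal (cfun G) := rfl

lemma cfun_mul_self {n : ℕ} (G : SimpleGraph (Fin n)) [DecidableRel G.Adj]
    (f : Fin n → Fin 2) : cfun G f * cfun G f = 1 := by
  rw [cfun, ← Finset.prod_mul_distrib]
  apply Finset.prod_eq_one
  intro p _
  split <;> norm_num

lemma czProd_mul_czProd {n : ℕ} (G : SimpleGraph (Fin n)) [DecidableRel G.Adj] :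
    czProd G * czProd G = 1 := by
  rw [czProd_eq, Matrix.diagonal_mul_diagonal]
  have h : (fun f => cfun G f * cfun G f) = fun _ => (1 : ℂ) := funext (cfun_mul_self G)
  rw [h, Matrix.diagonal_one]

lemma czProd_conjTranspose {n : ℕ} (G : SimpleGraph (Fin n)) [DecidableRel G.Adj] :
    (czProd G)ᴴ = czProd G := by
  rw [czProd_eq, Matrix.diagonal_conjTranspose]
  have h : star (cfun G) = cfun G := by
    funext f
    show star (cfun G f) = cfun G f
    rw [cfun, star_prod]
    apply Finset.prod_congr rfl
    intro p _
    split <;> simp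
  rw [h]

lemma cz_flip {n : ℕ} (G : SimpleGraph (Fin n)) [DecidableRel G.Adj] (i : Fin n)
    (f g : Fin n → Fin 2) (hi : f i ≠ g i) (hoff : ∀ j, j ≠ i → f j = g j) :
    cfun G f * cfun G g =
      ∏ k ∈ G.neighborFinset i, (if g k = 1 then (-1 : ℂ) else 1) := by
  rw [cfun, cfun, ← Finset.prod_mul_distrib]
  rw [← Finset.prod_filter_mul_prod_filter_not (edgePairs G) (fun p => p.1 = i ∨ p.2 = i)]
  have h2 : (∏ p ∈ (edgePairs G).filter (fun p => ¬(p.1 = i ∨ p.2 = i)),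
      ((if f p.1 = 1 ∧ f p.2 = 1 then (-1 : ℂ) else 1) *
        (if g p.1 = 1 ∧ g p.2 = 1 then (-1 : ℂ) else 1))) = 1 := by
    apply Finset.prod_eq_one
    intro p hp
    obtain ⟨-, hp2⟩ := Finset.mem_filter.mp hp
    push_neg at hp2
    rw [hoff p.1 hp2.1, hoff p.2 hp2.2]
    split <;> norm_num
  rw [h2, mul_one]
  apply Finset.prod_nbij' (fun p => if p.1 = i then p.2 else p.1)
    (fun k => if i < k then (i, k) else (k, i))
  · intro p hp
    obtain ⟨hpE, hp2⟩ := Finset.mem_filter.mp hp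
    obtain ⟨hlt, hadj⟩ := (Finset.mem_filter.mp hpE).2
    rcases hp2 with h1 | h1
    · rw [if_pos h1, SimpleGraph.mem_neighborFinset, ← h1]; exact hadj
    · have hne : p.1 ≠ i := by rintro rfl; rw [h1] at hlt; exact lt_irrefl _ hlt
      rw [if_neg hne, SimpleGraph.mem_neighborFinset, ← h1]; exact hadj.symm
  · intro k hk
    rw [SimpleGraph.mem_neighborFinset] at hk
    have hne : i ≠ k := hk.ne
    rcases hne.lt_or_gt with hlt | hlt
    · rw [if_pos hlt]
      refine Finset.mem_filter.mpr ⟨Finset.mem_filter.mpr ⟨Finset.mem_univ _, hlt, hk⟩, ?_⟩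
      exact Or.inl rfl
    · rw [if_neg (not_lt.mpr hlt.le)]
      refine Finset.mem_filter.mpr ⟨Finset.mem_filter.mpr ⟨Finset.mem_univ _, hlt, hk.symm⟩, ?_⟩
      exact Or.inr rfl
  · intro p hp
    obtain ⟨hpE, hp2⟩ := Finset.mem_filter.mp hp
    obtain ⟨hlt, hadj⟩ := (Finset.mem_filter.mp hpE).2
    rcases hp2 with h1 | h1
    · rw [if_pos h1, if_pos (h1 ▸ hlt), ← h1]
    · have hne : p.1 ≠ i := by rintro rfl; rw [h1] at hlt; exact lt_irrefl _ hlt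
      rw [if_neg hne, if_neg (by rw [← h1]; exact not_lt.mpr hlt.le), ← h1]
  · intro k hk
    rw [SimpleGraph.mem_neighborFinset] at hk
    have hne : i ≠ k := hk.ne
    rcases hne.lt_or_gt with hlt | hlt
    · rw [if_pos hlt]; simp
    · rw [if_neg (not_lt.mpr hlt.le)]
      exact if_neg (Ne.symm hne)
  · intro p hp
    obtain ⟨hpE, hp2⟩ := Finset.mem_filter.mp hp
    obtain ⟨hlt, hadj⟩ := (Finset.mem_filter.mp hpE).2
    have hne12 : p.1 ≠ p.2 := ne_of_lt hlt
    rcases hp2 with h1 | h1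
    · rw [if_pos h1]
      have hf2 : f p.2 = g p.2 := hoff p.2 (by rw [← h1]; exact hne12.symm)
      rw [← h1] at hi
      rcases fin2_cases (f p.1) with ha | ha <;> rcases fin2_cases (g p.1) with hb | hb <;>
        rcases fin2_cases (g p.2) with hc | hc <;> simp_all
    · have hne : p.1 ≠ i := by rintro rfl; rw [h1] at hlt; exact lt_irrefl _ hlt
      rw [if_neg hne]
      have hf1 : f p.1 = g p.1 := hoff p.1 hne
      rw [← h1] at hi
      rcases fin2_cases (f p.2) with ha | ha <;> rcases fin2_cases (g p.2) with hb | hb <;>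
        rcases fin2_cases (g p.1) with hc | hc <;> simp_all

lemma localOp_apply {n : ℕ} (A : Matrix (Fin 2) (Fin 2) ℂ) (i : Fin n) (f g : Fin n → Fin 2) :
    localOp A i f g = A (f i) (g i) * ∏ j ∈ Finset.univ.erase i, if f j = g j then (1 : ℂ) else 0
    := rfl

lemma cz_mul_localX {n : ℕ} (G : SimpleGraph (Fin n)) [DecidableRel G.Adj] (i : Fin n) :
    czProd G * localOp pauliX i = gOp G i * czProd G := by
  rw [gOp, czProd_eq]
  ext f g
  rw [Matrix.diagonal_mul, Matrix.mul_assoc, ← czProd_eq]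
  have hz : (zProd (G.neighborFinset i) * czProd G) =
      Matrix.diagonal (fun h => (∏ k ∈ G.neighborFinset i, if h k = 1 then (-1 : ℂ) else 1)
        * cfun G h) := by
    rw [zProd, czProd_eq, Matrix.diagonal_mul_diagonal]
  rw [hz, Matrix.mul_diagonal]
  by_cases hX : localOp pauliX i f g = 0
  · rw [hX]; ring
  · -- extract structure of f, g
    rw [localOp_apply] at hX
    have hXne := hX
    obtain ⟨h1, h2⟩ := mul_ne_zero_iff.mp hXne
    have hfi : f i ≠ g i := by
      intro hfg
      apply h1
      rw [hfg]
      rcases fin2_cases (g i) with h | h <;> rw [h] <;> simp [pauliX]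
    have hoff : ∀ j, j ≠ i → f j = g j := by
      intro j hj
      by_contra hne
      apply h2
      apply Finset.prod_eq_zero (Finset.mem_erase.mpr ⟨hj, Finset.mem_univ j⟩)
      rw [if_neg hne]
    have key : cfun G f = (∏ k ∈ G.neighborFinset i, if g k = 1 then (-1 : ℂ) else 1)
        * cfun G g := by
      have := cz_flip G i f g hfi hoff
      calc cfun G f = cfun G f * (cfun G g * cfun G g) := by rw [cfun_mul_self, mul_one]
        _ = (cfun G f * cfun G g) * cfun G g := by ring
        _ = _ := by rw [this]
    rw [localOp_apply, key]
    ring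

lemma Hn_mul_zSingle {n : ℕ} (i : Fin n) :
    Hn n * zProd {i} = localOp pauliX i * Hn n := by
  rw [Hn, zProd_eq_tensorAll, localOp_eq_tensorAll, tensorAll_mul, tensorAll_mul]
  apply congrArg tensorAll
  funext j
  by_cases h : j = i
  · subst h
    rw [if_pos (Finset.mem_singleton_self j), if_pos rfl, Hmat_mul_Z]
  · rw [if_neg (fun hh => h (Finset.mem_singleton.mp hh)), if_neg h, mul_one, one_mul]

def Umat {n : ℕ} (G : SimpleGraph (Fin n)) [DecidableRel G.Adj] :
    Matrix (Fin n → Fin 2) (Fin n → Fin 2) ℂ := czProd G * Hn n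

lemma Umat_conjTranspose {n : ℕ} (G : SimpleGraph (Fin n)) [DecidableRel G.Adj] :
    (Umat G)ᴴ = Hn n * czProd G := by
  rw [Umat, Matrix.conjTranspose_mul, Hn_conjTranspose, czProd_conjTranspose]

lemma Umat_mul_conjT {n : ℕ} (G : SimpleGraph (Fin n)) [DecidableRel G.Adj] :
    Umat G * (Umat G)ᴴ = 1 := by
  rw [Umat_conjTranspose, Umat, Matrix.mul_assoc, ← Matrix.mul_assoc (Hn n), Hn_mul_Hn,
    Matrix.one_mul, czProd_mul_czProd]

lemma conjT_mul_Umat {n : ℕ} (G : SimpleGraph (Fin n)) [DecidableRel G.Adj] :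
    (Umat G)ᴴ * Umat G = 1 := by
  rw [Umat_conjTranspose, Umat, Matrix.mul_assoc, ← Matrix.mul_assoc (czProd G),
    czProd_mul_czProd, Matrix.one_mul, Hn_mul_Hn]

lemma gOp_mul_Umat {n : ℕ} (G : SimpleGraph (Fin n)) [DecidableRel G.Adj] (i : Fin n) :
    gOp G i * Umat G = Umat G * zProd {i} := by
  rw [Umat, ← Matrix.mul_assoc, ← cz_mul_localX, Matrix.mul_assoc, ← Hn_mul_zSingle,
    ← Matrix.mul_assoc]

lemma gOp_eq_conj {n : ℕ} (G : SimpleGraph (Fin n)) [DecidableRel G.Adj] (i : Fin n) :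
    gOp G i = Umat G * zProd {i} * (Umat G)ᴴ := by
  have h : gOp G i * (Umat G * (Umat G)ᴴ) = Umat G * zProd {i} * (Umat G)ᴴ := by
    rw [← Matrix.mul_assoc, gOp_mul_Umat]
  rw [Umat_mul_conjT, Matrix.mul_one] at h
  exact h

def qfun {n : ℕ} (i : Fin n) : (Fin n → Fin 2) → ℂ := fun f => if f i = 0 then 1 else 0

lemma stabProj_eq_conj {n : ℕ} (G : SimpleGraph (Fin n)) [DecidableRel G.Adj] (i : Fin n) :
    stabProj G i = Umat G * Matrix.diagonal (qfun i) * (Umat G)ᴴ := by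
  have hQ : Matrix.diagonal (qfun i) = (2 : ℂ)⁻¹ • (zProd {i} + 1) := by
    rw [zProd, ← Matrix.diagonal_one, Matrix.diagonal_add, ← Matrix.diagonal_smul]
    apply congrArg Matrix.diagonal
    funext f
    show qfun i f = (2 : ℂ)⁻¹ * ((∏ k ∈ ({i} : Finset (Fin n)), if f k = 1 then (-1:ℂ) else 1) + 1)
    rw [Finset.prod_singleton, qfun]
    rcases fin2_cases (f i) with h | h <;> rw [h] <;> norm_num
  rw [stabProj, gOp_eq_conj, hQ, Matrix.mul_smul, Matrix.smul_mul]
  congr 1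
  rw [Matrix.mul_add, Matrix.add_mul, Matrix.mul_one, Umat_mul_conjT]

/-- conjugation by `Umat` as a monoid hom -/
def conjU {n : ℕ} (G : SimpleGraph (Fin n)) [DecidableRel G.Adj] :
    Matrix (Fin n → Fin 2) (Fin n → Fin 2) ℂ →* Matrix (Fin n → Fin 2) (Fin n → Fin 2) ℂ where
  toFun := fun A => Umat G * A * (Umat G)ᴴ
  map_one' := by show Umat G * 1 * (Umat G)ᴴ = 1; rw [Matrix.mul_one]; exact Umat_mul_conjT G
  map_mul' := by
    intro A B
    show Umat G * (A * B) * (Umat G)ᴴ = Umat G * A * (Umat G)ᴴ * (Umat G * B * (Umat G)ᴴ)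
    simp only [Matrix.mul_assoc]
    rw [show (Umat G)ᴴ * (Umat G * (B * (Umat G)ᴴ)) = B * (Umat G)ᴴ by
      rw [← Matrix.mul_assoc, conjT_mul_Umat, Matrix.one_mul]]

def diagHom {n : ℕ} :
    ((Fin n → Fin 2) → ℂ) →* Matrix (Fin n → Fin 2) (Fin n → Fin 2) ℂ where
  toFun := Matrix.diagonal
  map_one' := Matrix.diagonal_one
  map_mul' := fun a b => (Matrix.diagonal_mul_diagonal a b).symm

lemma noncommProd_stabProj {n : ℕ} (G : SimpleGraph (Fin n)) [DecidableRel G.Adj]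
    (S : Finset (Fin n))
    (hc : (S : Set (Fin n)).Pairwise fun a b => Commute (stabProj G a) (stabProj G b)) :
    S.noncommProd (fun i => stabProj G i) hc =
      Umat G * Matrix.diagonal (∏ i ∈ S, qfun i) * (Umat G)ᴴ := by
  have h1 : S.noncommProd (fun i => stabProj G i) hc =
      S.noncommProd (fun i => ((conjU G).comp diagHom) (qfun i))
        (fun _ _ _ _ _ => Commute.all _ _ |>.map _) := by
    apply Finset.noncommProd_congr rfl
    intro i _
    rw [MonoidHom.comp_apply]
    exact stabProj_eq_conj G i
  rw [h1, ← Finset.map_noncommProd S qfun (fun _ _ _ _ _ => Commute.all _ _)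
    ((conjU G).comp diagHom), Finset.noncommProd_eq_prod]
  rfl

def e0 {n : ℕ} : (Fin n → Fin 2) → ℂ := fun f => if f = 0 then 1 else 0

lemma Hn_mulVec_e0 {n : ℕ} : (Hn n).mulVec e0 = plusState n := by
  funext f
  rw [Matrix.mulVec, plusState]
  show (∑ g, Hn n f g * e0 g) = _
  have h1 : (∑ g, Hn n f g * e0 g) = ∑ g, if g = 0 then Hn n f g else 0 := by
    apply Finset.sum_congr rfl
    intro g _
    rw [e0]
    split <;> simp
  rw [h1, Finset.sum_ite_eq' Finset.univ (0 : Fin n → Fin 2) (fun g => Hn n f g),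
    if_pos (Finset.mem_univ _)]
  show (∏ j, Hmat (f j) ((0 : Fin n → Fin 2) j)) = _
  have h2 : ∀ j, Hmat (f j) ((0 : Fin n → Fin 2) j) = ((Real.sqrt 2 : ℂ))⁻¹ := by
    intro j
    show Hmat (f j) 0 = _
    rcases fin2_cases (f j) with h | h <;> rw [h] <;> simp [Hmat]
  rw [Finset.prod_congr rfl (fun j _ => h2 j), Finset.prod_const, Finset.card_univ,
    Fintype.card_fin]

lemma graphState_eq_U_e0 {n : ℕ} (G : SimpleGraph (Fin n)) [DecidableRel G.Adj] :
    graphState G = (Umat G).mulVec e0 := by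
  rw [graphState, Umat, ← Matrix.mulVec_mulVec, Hn_mulVec_e0]

lemma fidelity_eq {n : ℕ} (G : SimpleGraph (Fin n)) [DecidableRel G.Adj]
    (ϱ : Matrix (Fin n → Fin 2) (Fin n → Fin 2) ℂ) :
    star (graphState G) ⬝ᵥ ϱ.mulVec (graphState G) =
      ((Umat G)ᴴ * ϱ * Umat G) 0 0 := by
  rw [graphState_eq_U_e0, Matrix.star_mulVec, Matrix.mulVec_mulVec,
    ← Matrix.dotProduct_mulVec, Matrix.mulVec_mulVec, ← Matrix.mul_assoc]
  have hstar : star (e0 : (Fin n → Fin 2) → ℂ) = e0 := by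
    funext f
    show star (e0 f) = e0 f
    rw [e0]
    split <;> simp
  rw [hstar]
  rw [dotProduct]
  have h1 : ∀ g : Fin n → Fin 2,
      e0 g * (((Umat G)ᴴ * ϱ * Umat G).mulVec e0) g =
      if g = 0 then (((Umat G)ᴴ * ϱ * Umat G).mulVec e0) g else 0 := by
    intro g; rw [e0]; split <;> simp
  rw [Finset.sum_congr rfl (fun g _ => h1 g), Finset.sum_ite_eq' Finset.univ
    (0 : Fin n → Fin 2), if_pos (Finset.mem_univ _)]
  rw [Matrix.mulVec]
  show (∑ g, ((Umat G)ᴴ * ϱ * Umat G) 0 g * e0 g) = _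
  have h2 : ∀ g : Fin n → Fin 2,
      ((Umat G)ᴴ * ϱ * Umat G) 0 g * e0 g =
      if g = 0 then ((Umat G)ᴴ * ϱ * Umat G) 0 g else 0 := by
    intro g; rw [e0]; split <;> simp
  rw [Finset.sum_congr rfl (fun g _ => h2 g), Finset.sum_ite_eq' Finset.univ
    (0 : Fin n → Fin 2), if_pos (Finset.mem_univ _)]

lemma prod_qfun_apply {n : ℕ} (S : Finset (Fin n)) (f : Fin n → Fin 2) :
    (∏ i ∈ S, qfun i) f = if (∀ i ∈ S, f i = 0) then (1 : ℂ) else 0 := by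
  rw [Finset.prod_apply]
  by_cases h : ∀ i ∈ S, f i = 0
  · rw [if_pos h]
    exact Finset.prod_eq_one (fun i hi => by rw [qfun, if_pos (h i hi)])
  · rw [if_neg h]
    push_neg at h
    obtain ⟨i, hi, hne⟩ := h
    exact Finset.prod_eq_zero hi (by rw [qfun, if_neg hne])

/-- real indicator of "f vanishes on S" -/
def tind {n : ℕ} (S : Finset (Fin n)) (f : Fin n → Fin 2) : ℝ :=
  if ∀ i ∈ S, f i = 0 then 1 else 0

lemma tind_nonneg {n : ℕ} (S : Finset (Fin n)) (f : Fin n → Fin 2) : 0 ≤ tind S f := by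
  rw [tind]; split <;> norm_num

lemma tind_le_one {n : ℕ} (S : Finset (Fin n)) (f : Fin n → Fin 2) : tind S f ≤ 1 := by
  rw [tind]; split <;> norm_num

lemma prod_qfun_apply' {n : ℕ} (S : Finset (Fin n)) (f : Fin n → Fin 2) :
    (∏ i ∈ S, qfun i) f = ((tind S f : ℝ) : ℂ) := by
  rw [prod_qfun_apply, tind]
  split <;> simp

/-- the diagonal real symbol of the witness -/
def dfun {n : ℕ} (S₁ S₂ : Finset (Fin n)) (f : Fin n → Fin 2) : ℂ :=
  ((3 - 2 * (tind S₁ f + tind S₂ f) : ℝ) : ℂ)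

lemma diag_entry_eq {n : ℕ} (σ : Matrix (Fin n → Fin 2) (Fin n → Fin 2) ℂ)
    (f : Fin n → Fin 2) :
    star (Pi.single f (1:ℂ)) ⬝ᵥ σ.mulVec (Pi.single f 1) = σ f f := by
  have hs : star (Pi.single f (1:ℂ) : (Fin n → Fin 2) → ℂ) = Pi.single f 1 := by
    funext g
    rw [Pi.star_apply, Pi.single_apply]
    split <;> simp
  rw [hs, Matrix.mulVec_single, single_dotProduct, one_mul]
  simp

/-- for any density matrix `ϱ` on `n` qubits and a 2-colorable graph
state `|G⟩` with color classes `S₁, S₂`, the fidelity `F = ⟨G|ϱ|G⟩` satisfies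
`F ≥ 1/2 − (1/2)·Tr(W⁽²⁾ ϱ)`, where
`W⁽²⁾ = 3I − 2[∏_{i∈S₁}((gᵢ+I)/2) + ∏_{i∈S₂}((gᵢ+I)/2)]`. -/
theorem fidelity_ge_witness_bound {n : ℕ} (G : SimpleGraph (Fin n))
    [DecidableRel G.Adj] (S₁ S₂ : Finset (Fin n))
    (hdisj : Disjoint S₁ S₂) (hcover : S₁ ∪ S₂ = Finset.univ)
    (hcol₁ : ∀ i ∈ S₁, ∀ j ∈ S₁, ¬ G.Adj i j)
    (hcol₂ : ∀ i ∈ S₂, ∀ j ∈ S₂, ¬ G.Adj i j)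
    (hc₁ : (S₁ : Set (Fin n)).Pairwise fun a b => Commute (stabProj G a) (stabProj G b))
    (hc₂ : (S₂ : Set (Fin n)).Pairwise fun a b => Commute (stabProj G a) (stabProj G b))
    (ϱ : Matrix (Fin n → Fin 2) (Fin n → Fin 2) ℂ)
    (hϱ : ϱ.PosSemidef) (htr : ϱ.trace = 1) :
    (star (graphState G) ⬝ᵥ ϱ.mulVec (graphState G)).re ≥
      1 / 2 - 1 / 2 *
        ((((3 : ℂ) • (1 : Matrix (Fin n → Fin 2) (Fin n → Fin 2) ℂ) -
          (2 : ℂ) • (S₁.noncommProd (fun i => stabProj G i) hc₁ +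
            S₂.noncommProd (fun i => stabProj G i) hc₂)) * ϱ).trace).re := by
  classical
  have hσps : ((Umat G)ᴴ * ϱ * Umat G).PosSemidef := hϱ.conjTranspose_mul_mul_same (Umat G)
  set σ := (Umat G)ᴴ * ϱ * Umat G with hσdef
  rw [fidelity_eq, noncommProd_stabProj G S₁ hc₁, noncommProd_stabProj G S₂ hc₂]
  -- rewrite witness as conjugated diagonal
  have e1 : (3 : ℂ) • (1 : Matrix (Fin n → Fin 2) (Fin n → Fin 2) ℂ)
      = Matrix.diagonal (fun _ => (3:ℂ)) := by
    rw [← Matrix.diagonal_one, ← Matrix.diagonal_smul]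
    apply congrArg Matrix.diagonal
    funext f
    simp
  have e2 : (2 : ℂ) • (Matrix.diagonal (∏ i ∈ S₁, qfun i) + Matrix.diagonal (∏ i ∈ S₂, qfun i))
      = Matrix.diagonal (fun f => 2 * (((tind S₁ f : ℝ) : ℂ) + ((tind S₂ f : ℝ) : ℂ))) := by
    rw [Matrix.diagonal_add, ← Matrix.diagonal_smul]
    apply congrArg Matrix.diagonal
    funext f
    show (2:ℂ) * ((∏ i ∈ S₁, qfun i) f + (∏ i ∈ S₂, qfun i) f)
      = 2 * (((tind S₁ f : ℝ) : ℂ) + ((tind S₂ f : ℝ) : ℂ))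
    rw [prod_qfun_apply', prod_qfun_apply']
  have hDd : (3 : ℂ) • (1 : Matrix (Fin n → Fin 2) (Fin n → Fin 2) ℂ)
      - (2 : ℂ) • (Matrix.diagonal (∏ i ∈ S₁, qfun i) + Matrix.diagonal (∏ i ∈ S₂, qfun i))
      = Matrix.diagonal (dfun S₁ S₂) := by
    rw [e1, e2, Matrix.diagonal_sub]
    apply congrArg Matrix.diagonal
    funext f
    show (3:ℂ) - 2 * (((tind S₁ f : ℝ) : ℂ) + ((tind S₂ f : ℝ) : ℂ)) = dfun S₁ S₂ f
    rw [dfun]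
    push_cast
    ring
  have hW : (3 : ℂ) • (1 : Matrix (Fin n → Fin 2) (Fin n → Fin 2) ℂ) -
      (2 : ℂ) • (Umat G * Matrix.diagonal (∏ i ∈ S₁, qfun i) * (Umat G)ᴴ +
        Umat G * Matrix.diagonal (∏ i ∈ S₂, qfun i) * (Umat G)ᴴ) =
      Umat G * Matrix.diagonal (dfun S₁ S₂) * (Umat G)ᴴ := by
    rw [← hDd]
    simp only [mul_sub, sub_mul, mul_add, add_mul, Matrix.mul_smul, Matrix.smul_mul,
      Matrix.mul_one, smul_add, Umat_mul_conjT]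
  rw [hW]
  -- trace identity
  have htrace : (Umat G * Matrix.diagonal (dfun S₁ S₂) * (Umat G)ᴴ * ϱ).trace =
      (σ * Matrix.diagonal (dfun S₁ S₂)).trace := by
    calc (Umat G * Matrix.diagonal (dfun S₁ S₂) * (Umat G)ᴴ * ϱ).trace
        = ((Umat G * Matrix.diagonal (dfun S₁ S₂)) * ((Umat G)ᴴ * ϱ)).trace := by
          rw [Matrix.mul_assoc (Umat G * Matrix.diagonal (dfun S₁ S₂)) ((Umat G)ᴴ) ϱ]
      _ = (((Umat G)ᴴ * ϱ) * (Umat G * Matrix.diagonal (dfun S₁ S₂))).trace :=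
          Matrix.trace_mul_comm _ _
      _ = (σ * Matrix.diagonal (dfun S₁ S₂)).trace := by
          rw [hσdef, Matrix.mul_assoc ((Umat G)ᴴ * ϱ) (Umat G) (Matrix.diagonal (dfun S₁ S₂))]
  rw [htrace]
  have hsum : (σ * Matrix.diagonal (dfun S₁ S₂)).trace = ∑ f, σ f f * dfun S₁ S₂ f := by
    rw [Matrix.trace]
    apply Finset.sum_congr rfl
    intro f _
    rw [Matrix.diag_apply, Matrix.mul_diagonal]
  rw [hsum]
  -- real diagonal entries
  have him : ∀ f, (σ f f).im = 0 := by
    intro f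
    have h1 := congrFun (congrFun hσps.1 f) f
    rw [Matrix.conjTranspose_apply] at h1
    exact Complex.conj_eq_iff_im.mp h1
  have hre : ∀ f, 0 ≤ (σ f f).re := by
    intro f
    have h := hσps.2 (Finsupp.single f 1)
    simp [Finsupp.sum_single_index] at h
    exact (Complex.le_def.mp h).1
  have hterm : ∀ f, (σ f f * dfun S₁ S₂ f).re =
      (σ f f).re * (3 - 2 * (tind S₁ f + tind S₂ f)) := by
    intro f
    rw [Complex.mul_re, him, zero_mul, sub_zero, dfun, Complex.ofReal_re]
  have hresum : (∑ f, σ f f * dfun S₁ S₂ f).re =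
      ∑ f, (σ f f).re * (3 - 2 * (tind S₁ f + tind S₂ f)) := by
    rw [Complex.re_sum]
    exact Finset.sum_congr rfl (fun f _ => hterm f)
  rw [hresum]
  -- sum of diagonal re is 1
  have htrσ : σ.trace = 1 := by
    rw [hσdef, Matrix.mul_assoc, Matrix.trace_mul_comm, Matrix.mul_assoc,
      Umat_mul_conjT, Matrix.mul_one, htr]
  have hrsum : ∑ f, (σ f f).re = 1 := by
    have h1 := congrArg Complex.re htrσ
    rw [Matrix.trace, Complex.re_sum] at h1
    simpa using h1
  -- pointwise bound
  have hpoint : ∀ f : Fin n → Fin 2, (σ f f).re * (tind S₁ f + tind S₂ f) ≤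
      (σ f f).re * (1 + if f = 0 then 1 else 0) := by
    intro f
    apply mul_le_mul_of_nonneg_left _ (hre f)
    by_cases h0 : f = 0
    · rw [if_pos h0]
      have := tind_le_one S₁ f
      have := tind_le_one S₂ f
      linarith
    · rw [if_neg h0]
      have hnboth : ¬((∀ i ∈ S₁, f i = 0) ∧ (∀ i ∈ S₂, f i = 0)) := by
        rintro ⟨ha, hb⟩
        apply h0
        funext i
        have hi : i ∈ S₁ ∪ S₂ := hcover ▸ Finset.mem_univ i
        rcases Finset.mem_union.mp hi with h | h
        · exact ha i h
        · exact hb i h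
      rw [tind, tind]
      split_ifs with hA hB
      · exact absurd ⟨hA, hB⟩ hnboth
      all_goals norm_num
  have hkey : ∑ f, (σ f f).re * (tind S₁ f + tind S₂ f) ≤ 1 + (σ 0 0).re := by
    calc ∑ f, (σ f f).re * (tind S₁ f + tind S₂ f)
        ≤ ∑ f, (σ f f).re * (1 + if f = 0 then 1 else 0) :=
          Finset.sum_le_sum (fun f _ => hpoint f)
      _ = ∑ f, (σ f f).re + ∑ f, (if f = 0 then (σ f f).re else 0) := by
          rw [← Finset.sum_add_distrib]
          apply Finset.sum_congr rfl
          intro f _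
          split_ifs <;> ring
      _ = 1 + (σ 0 0).re := by
          rw [hrsum, Finset.sum_ite_eq' Finset.univ (0 : Fin n → Fin 2)
            (fun f => (σ f f).re), if_pos (Finset.mem_univ _)]
  have hexpand : ∑ f, (σ f f).re * (3 - 2 * (tind S₁ f + tind S₂ f)) =
      3 * (∑ f, (σ f f).re) - 2 * ∑ f, (σ f f).re * (tind S₁ f + tind S₂ f) := by
    rw [Finset.mul_sum, Finset.mul_sum, ← Finset.sum_sub_distrib]
    apply Finset.sum_congr rfl
    intro f _
    ring
  rw [hexpand, hrsum]
  linarith [hkey]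
end
end

section
/- Serfling's bound: Let Y_1,…,Y_T ∈ {0,1} with T = N + K, and let Π be a uniformly random K-subset of {1,…,T}, Π̄ its complement. Then for any 0 < ν < 1, Pr( Σ_{k∈Π̄} Y_k ≤ (N/K) Σ_{k∈Π} Y_k + Nν ) ≥ 1 − exp( −2ν²NK² / ((N+K)(K+1)) ). -/
open Finset


lemma hoeff_two_point (p : ℝ) (hp0 : 0 ≤ p) (hp1 : p ≤ 1) (t : ℝ) :
    (1 - p) + p * Real.exp t ≤ Real.exp (p * t + t ^ 2 / 8) := by
  set g : ℝ → ℝ := fun x => (1 - p) + p * Real.exp x with hg_def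
  have hg_pos : ∀ x, 0 < g x := by
    intro x
    rcases eq_or_lt_of_le hp1 with h | h
    · simp only [hg_def, ← h]
      have := Real.exp_pos x; nlinarith
    · have h1 : 0 < 1 - p := by linarith
      have h2 : 0 ≤ p * Real.exp x := mul_nonneg hp0 (Real.exp_pos x).le
      simp only [hg_def]; linarith
  have hg_deriv : ∀ x, HasDerivAt g (p * Real.exp x) x := by
    intro x
    exact ((Real.hasDerivAt_exp x).const_mul p).const_add (1 - p)
  set Φ : ℝ → ℝ := fun x => p + x / 4 - p * Real.exp x / g x with hΦ_def
  set F : ℝ → ℝ := fun x => p * x + x ^ 2 / 8 - Real.log (g x) with hF_def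
  have hF_deriv : ∀ x, HasDerivAt F (Φ x) x := by
    intro x
    have h1 : HasDerivAt (fun x : ℝ => p * x) p x := by
      simpa using (hasDerivAt_id x).const_mul p
    have h2 : HasDerivAt (fun x : ℝ => x ^ 2 / 8) (x / 4) x := by
      have := (hasDerivAt_pow 2 x).div_const 8
      exact this.congr_deriv (by norm_num; ring)
    have h3 : HasDerivAt (fun x => Real.log (g x)) (p * Real.exp x / g x) x :=
      (hg_deriv x).log (hg_pos x).ne'
    exact (h1.add h2).sub h3
  have hΦ_deriv : ∀ x, HasDerivAt Φ
      (1 / 4 - (p * Real.exp x * g x - p * Real.exp x * (p * Real.exp x)) / (g x) ^ 2) x := by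
    intro x
    have h2 : HasDerivAt (fun x : ℝ => x / 4) (1 / 4) x := by
      simpa using (hasDerivAt_id x).div_const 4
    have h3 : HasDerivAt (fun x => p * Real.exp x / g x)
        ((p * Real.exp x * g x - p * Real.exp x * (p * Real.exp x)) / (g x) ^ 2) x :=
      ((Real.hasDerivAt_exp x).const_mul p).div (hg_deriv x) (hg_pos x).ne'
    exact (((hasDerivAt_const x p).add h2).sub h3).congr_deriv (by ring)
  have hΦ_mono : Monotone Φ := by
    apply monotone_of_deriv_nonneg (fun x => (hΦ_deriv x).differentiableAt)
    intro x
    rw [(hΦ_deriv x).deriv, sub_nonneg, div_le_iff₀ (pow_pos (hg_pos x) 2)]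
    have hgx : g x = (1 - p) + p * Real.exp x := rfl
    nlinarith [sq_nonneg ((1 - p) - p * Real.exp x), Real.exp_pos x, hg_pos x]
  have hΦ0 : Φ 0 = 0 := by
    simp only [hΦ_def, hg_def, Real.exp_zero, mul_one]
    field_simp
    ring
  have hF0 : F 0 = 0 := by
    simp [hF_def, hg_def]
  have hFdiff : Differentiable ℝ F := fun x => (hF_deriv x).differentiableAt
  have hF_nonneg : ∀ x, 0 ≤ F x := by
    intro x
    rcases le_total 0 x with hx | hx
    · have hmono : MonotoneOn F (Set.Ici 0) := by
        apply monotoneOn_of_deriv_nonneg (convex_Ici 0) hFdiff.continuous.continuousOn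
          (fun y _ => (hFdiff y).differentiableWithinAt)
        intro y hy
        rw [interior_Ici, Set.mem_Ioi] at hy
        rw [(hF_deriv y).deriv]
        calc (0:ℝ) = Φ 0 := hΦ0.symm
          _ ≤ Φ y := hΦ_mono hy.le
      rw [← hF0]
      exact hmono Set.self_mem_Ici hx hx
    · have hanti : AntitoneOn F (Set.Iic 0) := by
        apply antitoneOn_of_deriv_nonpos (convex_Iic 0) hFdiff.continuous.continuousOn
          (fun y _ => (hFdiff y).differentiableWithinAt)
        intro y hy
        rw [interior_Iic, Set.mem_Iio] at hy
        rw [(hF_deriv y).deriv]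
        calc Φ y ≤ Φ 0 := hΦ_mono hy.le
          _ = 0 := hΦ0
      rw [← hF0]
      exact hanti hx Set.self_mem_Iic hx
  have hft := hF_nonneg t
  have hlog : Real.log (g t) ≤ p * t + t ^ 2 / 8 := by
    simp only [hF_def] at hft; linarith
  calc (1 - p) + p * Real.exp t = g t := rfl
    _ ≤ Real.exp (p * t + t ^ 2 / 8) := by
        rw [← Real.exp_log (hg_pos t)]
        exact Real.exp_le_exp.2 hlog



lemma hoeff_comb (p x y : ℝ) (hp0 : 0 ≤ p) (hp1 : p ≤ 1)
    (h : (1 - p) + p * Real.exp (x - y) ≤ Real.exp (p * (x - y) + (x - y) ^ 2 / 8)) :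
    (1 - p) * Real.exp y + p * Real.exp x ≤
      Real.exp (p * x + (1 - p) * y + (x - y) ^ 2 / 8) := by
  have := mul_le_mul_of_nonneg_right h (Real.exp_pos y).le
  calc (1 - p) * Real.exp y + p * Real.exp x
      = ((1 - p) + p * Real.exp (x - y)) * Real.exp y := by
        have hxy : Real.exp x = Real.exp (x - y) * Real.exp y := by
          rw [← Real.exp_add]; congr 1; ring
        rw [hxy]; ring
    _ ≤ Real.exp (p * (x - y) + (x - y) ^ 2 / 8) * Real.exp y := this
    _ = Real.exp (p * x + (1 - p) * y + (x - y) ^ 2 / 8) := by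
        rw [← Real.exp_add]; congr 1; ring

lemma sum_powersetCard_succ {α : Type*} [Fintype α] [DecidableEq α] (k : ℕ) (f : Finset α → ℝ) :
    ∑ s ∈ (Finset.univ : Finset α).powersetCard k, ∑ x ∈ sᶜ, f (insert x s)
      = ((k : ℝ) + 1) * ∑ s ∈ (Finset.univ : Finset α).powersetCard (k + 1), f s := by
  have key : ∑ s ∈ (Finset.univ : Finset α).powersetCard k, ∑ x ∈ sᶜ, f (insert x s)
      = ∑ s ∈ (Finset.univ : Finset α).powersetCard (k + 1), ∑ _y ∈ s, f s := by
    rw [Finset.sum_sigma', Finset.sum_sigma']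
    apply Finset.sum_nbij' (i := fun q => (⟨insert q.2 q.1, q.2⟩ : Σ _s : Finset α, α))
      (j := fun q => (⟨q.1.erase q.2, q.2⟩ : Σ _s : Finset α, α))
    · rintro ⟨s, x⟩ hq
      rw [Finset.mem_sigma, Finset.mem_powersetCard_univ] at hq ⊢
      obtain ⟨hcard, hx⟩ := hq
      rw [Finset.mem_compl] at hx
      exact ⟨by rw [Finset.card_insert_of_notMem hx, hcard], Finset.mem_insert_self _ _⟩
    · rintro ⟨s, y⟩ hq
      rw [Finset.mem_sigma, Finset.mem_powersetCard_univ] at hq ⊢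
      obtain ⟨hcard, hy⟩ := hq
      refine ⟨by rw [Finset.card_erase_of_mem hy, hcard]; rfl, ?_⟩
      rw [Finset.mem_compl]
      exact Finset.notMem_erase _ _
    · rintro ⟨s, x⟩ hq
      rw [Finset.mem_sigma, Finset.mem_powersetCard_univ] at hq
      obtain ⟨hcard, hx⟩ := hq
      rw [Finset.mem_compl] at hx
      simp [Finset.erase_insert hx]
    · rintro ⟨s, y⟩ hq
      rw [Finset.mem_sigma, Finset.mem_powersetCard_univ] at hq
      obtain ⟨hcard, hy⟩ := hq
      simp [Finset.insert_erase hy]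
    · rintro ⟨s, x⟩ hq
      rfl
  rw [key, Finset.mul_sum]
  apply Finset.sum_congr rfl
  intro s hs
  rw [Finset.mem_powersetCard_univ] at hs
  rw [Finset.sum_const, hs, nsmul_eq_mul]
  push_cast
  ring

lemma serfling_step (N K n : ℕ) (hn : n + 1 ≤ N) (hK : 0 < K)
    (Y : Fin (N + K) → ℝ) (hY : ∀ k, Y k = 0 ∨ Y k = 1) (L : ℝ)
    (s : Finset (Fin (N + K))) (hs : s.card = n) :
    ∑ x ∈ sᶜ, Real.exp (L * ((∑ i ∈ insert x s, Y i)
        - ((n : ℝ) + 1) * ((∑ i, Y i) / (N + K))) / ((N + K : ℝ) - n - 1))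
      ≤ ((N + K : ℝ) - n) * Real.exp (L * ((∑ i ∈ s, Y i)
          - (n : ℝ) * ((∑ i, Y i) / (N + K))) / ((N + K : ℝ) - n))
        * Real.exp (L ^ 2 / (8 * ((N + K : ℝ) - n - 1) ^ 2)) := by
  set Tr : ℝ := (N + K : ℝ) with hTr
  set m : ℝ := ∑ i, Y i with hm
  set μ : ℝ := m / Tr with hμ
  set a : ℝ := ∑ i ∈ s, Y i with ha
  set R : ℝ := Tr - n with hR
  have hTn : (n : ℝ) + 1 ≤ (N : ℝ) := by exact_mod_cast hn
  have hKr : (1 : ℝ) ≤ (K : ℝ) := by exact_mod_cast hK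
  have hTrn : (N : ℝ) + (K : ℝ) = Tr := by rw [hTr]
  have hR1 : (1 : ℝ) ≤ R - 1 := by rw [hR]; linarith
  have hRpos : 0 < R := by linarith
  have hR1pos : 0 < R - 1 := by linarith
  have hTpos : (0:ℝ) < Tr := by
    have hN0 : (0:ℝ) ≤ (N:ℝ) := Nat.cast_nonneg N
    linarith
  set v : ℝ := L * (a - ((n : ℝ) + 1) * μ) / (R - 1) with hv
  set u : ℝ := L * (a + 1 - ((n : ℝ) + 1) * μ) / (R - 1) with hu
  set m' : ℝ := ∑ x ∈ sᶜ, Y x with hm'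
  set p : ℝ := m' / R with hp
  -- pointwise rewrite
  have hpoint : ∀ x ∈ sᶜ, Real.exp (L * ((∑ i ∈ insert x s, Y i)
      - ((n : ℝ) + 1) * μ) / (Tr - n - 1))
      = Real.exp v + Y x * (Real.exp u - Real.exp v) := by
    intro x hx
    rw [Finset.mem_compl] at hx
    rw [Finset.sum_insert hx]
    have hRe : Tr - (n:ℝ) - 1 = R - 1 := by rw [hR]
    rw [hRe]
    rcases hY x with h0 | h1
    · rw [h0]; rw [hv, ha]; ring_nf
    · rw [h1]; rw [hu, ha]; ring_nf
  rw [Finset.sum_congr rfl hpoint]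
  have hcard : (sᶜ.card : ℝ) = R := by
    rw [Finset.card_compl, hs]
    have hnT : n ≤ N + K := by omega
    rw [Fintype.card_fin]
    rw [hR, hTr]
    push_cast [hnT]
    ring
  have hsum : ∑ x ∈ sᶜ, (Real.exp v + Y x * (Real.exp u - Real.exp v))
      = R * ((1 - p) * Real.exp v + p * Real.exp u) := by
    rw [Finset.sum_add_distrib, Finset.sum_const, ← Finset.sum_mul, ← hm', nsmul_eq_mul, hcard]
    rw [hp]
    field_simp
    ring
  rw [hsum]
  -- p ∈ [0,1]
  have hm'0 : 0 ≤ m' := Finset.sum_nonneg (fun i _ => by rcases hY i with h | h <;> rw [h] <;> norm_num)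
  have hm'1 : m' ≤ (sᶜ.card : ℝ) := by
    rw [hm']
    calc ∑ x ∈ sᶜ, Y x ≤ ∑ _x ∈ sᶜ, (1:ℝ) :=
          Finset.sum_le_sum (fun i _ => by rcases hY i with h | h <;> rw [h] <;> norm_num)
      _ = (sᶜ.card : ℝ) := by rw [Finset.sum_const, nsmul_eq_mul, mul_one]
  have hp0 : 0 ≤ p := div_nonneg hm'0 hRpos.le
  have hp1 : p ≤ 1 := by
    rw [hp, div_le_one hRpos]
    rw [hcard] at hm'1
    exact hm'1
  have hhoeff := hoeff_comb p u v hp0 hp1 (hoeff_two_point p hp0 hp1 (u - v))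
  -- martingale identity : p * u + (1 - p) * v = L * (a - n * μ) / R
  have hma : m' = m - a := by
    have := Finset.sum_add_sum_compl s Y
    rw [← ha, ← hm, ← hm'] at this
    linarith
  have hmean : p * u + (1 - p) * v = L * (a - (n : ℝ) * μ) / R := by
    rw [hp, hu, hv, hma, hμ, hR]
    have hA : Tr - (n:ℝ) ≠ 0 := (by linarith : (0:ℝ) < Tr - n).ne'
    have hB : Tr - (n:ℝ) - 1 ≠ 0 := (by linarith : (0:ℝ) < Tr - n - 1).ne'
    field_simp
    ring
  have hvar : (u - v) ^ 2 / 8 = L ^ 2 / (8 * (R - 1) ^ 2) := by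
    rw [hu, hv]
    first
    | (field_simp; ring)
    | field_simp
  have hfin : Real.exp (p * u + (1 - p) * v + (u - v) ^ 2 / 8)
      = Real.exp (L * (a - (n : ℝ) * μ) / (Tr - n)) * Real.exp (L ^ 2 / (8 * (Tr - (n:ℝ) - 1) ^ 2)) := by
    rw [← Real.exp_add, hmean, hvar]
  calc R * ((1 - p) * Real.exp v + p * Real.exp u)
      ≤ R * Real.exp (p * u + (1 - p) * v + (u - v) ^ 2 / 8) := by
        apply mul_le_mul_of_nonneg_left _ hRpos.le
        exact hhoeff
    _ = (Tr - n) * Real.exp (L * (a - (n : ℝ) * μ) / (Tr - n))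
        * Real.exp (L ^ 2 / (8 * (Tr - (n:ℝ) - 1) ^ 2)) := by
        rw [hfin, hR]; ring

lemma serfling_mgf (N K : ℕ) (hN : 0 < N) (hK : 0 < K)
    (Y : Fin (N + K) → ℝ) (hY : ∀ k, Y k = 0 ∨ Y k = 1) (L : ℝ) (n : ℕ) :
    n ≤ N →
    ∑ s ∈ (Finset.univ : Finset (Fin (N + K))).powersetCard n,
        Real.exp (L * ((∑ i ∈ s, Y i) - (n : ℝ) * ((∑ i, Y i) / (N + K)))
          / ((N + K : ℝ) - n))
      ≤ ((N + K).choose n : ℝ) *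
        Real.exp (L ^ 2 / 8 * ∑ j ∈ Finset.range n, 1 / ((N + K : ℝ) - 1 - j) ^ 2) := by
  induction n with
  | zero => intro _; simp
  | succ n ih =>
    intro hn1
    have hn' : n ≤ N := by omega
    have IH := ih hn'
    set Tr : ℝ := (N + K : ℝ) with hTr
    set μ : ℝ := (∑ i, Y i) / Tr with hμ
    set g : Finset (Fin (N + K)) → ℝ := fun t =>
      Real.exp (L * ((∑ i ∈ t, Y i) - ((n : ℝ) + 1) * μ) / (Tr - n - 1)) with hg
    have hTn : (n : ℝ) + 1 ≤ (N : ℝ) := by exact_mod_cast hn1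
    have hKr : (1 : ℝ) ≤ (K : ℝ) := by exact_mod_cast hK
    have hN0 : (0 : ℝ) ≤ (N : ℝ) := Nat.cast_nonneg N
    have hTrn : 0 < Tr - n := by rw [hTr]; push_cast; linarith
    have hgoal : ∀ s ∈ (Finset.univ : Finset (Fin (N + K))).powersetCard (n + 1),
        Real.exp (L * ((∑ i ∈ s, Y i) - ((n + 1 : ℕ) : ℝ) * μ) / (Tr - ((n + 1 : ℕ) : ℝ)))
          = g s := by
      intro s _
      rw [hg]
      congr 1
      push_cast
      ring
    have hstep : ∀ s ∈ (Finset.univ : Finset (Fin (N + K))).powersetCard n,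
        ∑ x ∈ sᶜ, g (insert x s)
          ≤ (Tr - n) * Real.exp (L * ((∑ i ∈ s, Y i) - (n : ℝ) * μ) / (Tr - n))
            * Real.exp (L ^ 2 / (8 * (Tr - n - 1) ^ 2)) := by
      intro s hs
      exact serfling_step N K n hn1 hK Y hY L s (Finset.mem_powersetCard_univ.mp hs)
    have key := sum_powersetCard_succ n g
    have h1 : ∑ s ∈ (Finset.univ : Finset (Fin (N + K))).powersetCard n,
        ∑ x ∈ sᶜ, g (insert x s)
        ≤ (Tr - n) * (∑ s ∈ (Finset.univ : Finset (Fin (N + K))).powersetCard n,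
            Real.exp (L * ((∑ i ∈ s, Y i) - (n : ℝ) * μ) / (Tr - n)))
          * Real.exp (L ^ 2 / (8 * (Tr - n - 1) ^ 2)) := by
      calc ∑ s ∈ (Finset.univ : Finset (Fin (N + K))).powersetCard n,
            ∑ x ∈ sᶜ, g (insert x s)
          ≤ ∑ s ∈ (Finset.univ : Finset (Fin (N + K))).powersetCard n,
            ((Tr - n) * Real.exp (L * ((∑ i ∈ s, Y i) - (n : ℝ) * μ) / (Tr - n))
              * Real.exp (L ^ 2 / (8 * (Tr - n - 1) ^ 2))) := Finset.sum_le_sum hstep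
        _ = _ := by rw [← Finset.sum_mul, ← Finset.mul_sum]
    have hfac : (((N + K).choose (n + 1) : ℝ)) * ((n : ℝ) + 1)
        = (((N + K).choose n : ℝ)) * (Tr - n) := by
      have := Nat.choose_succ_right_eq (N + K) n
      have hsub : ((N + K - n : ℕ) : ℝ) = Tr - n := by
        have hnT : n ≤ N + K := by omega
        rw [hTr]; push_cast [hnT]; try ring
      calc (((N + K).choose (n + 1) : ℝ)) * ((n : ℝ) + 1)
          = (((N + K).choose (n + 1) * (n + 1) : ℕ) : ℝ) := by push_cast; ring
        _ = (((N + K).choose n * (N + K - n) : ℕ) : ℝ) := by rw [this]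
        _ = (((N + K).choose n : ℝ)) * (Tr - n) := by push_cast [hsub]; try ring
    have hposn1 : (0 : ℝ) < (n : ℝ) + 1 := by positivity
    rw [Finset.sum_congr rfl hgoal]
    rw [← mul_le_mul_iff_right₀ hposn1]
    calc ((n : ℝ) + 1) * ∑ s ∈ (Finset.univ : Finset (Fin (N + K))).powersetCard (n + 1), g s
        = ∑ s ∈ (Finset.univ : Finset (Fin (N + K))).powersetCard n,
            ∑ x ∈ sᶜ, g (insert x s) := by rw [key]
      _ ≤ (Tr - n) * (∑ s ∈ (Finset.univ : Finset (Fin (N + K))).powersetCard n,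
            Real.exp (L * ((∑ i ∈ s, Y i) - (n : ℝ) * μ) / (Tr - n)))
          * Real.exp (L ^ 2 / (8 * (Tr - n - 1) ^ 2)) := h1
      _ ≤ (Tr - n) * (((N + K).choose n : ℝ) *
            Real.exp (L ^ 2 / 8 * ∑ j ∈ Finset.range n, 1 / (Tr - 1 - j) ^ 2))
          * Real.exp (L ^ 2 / (8 * (Tr - n - 1) ^ 2)) := by
          apply mul_le_mul_of_nonneg_right _ (Real.exp_nonneg _)
          exact mul_le_mul_of_nonneg_left IH hTrn.le
      _ = ((n : ℝ) + 1) * (((N + K).choose (n + 1) : ℝ) *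
            Real.exp (L ^ 2 / 8 * ∑ j ∈ Finset.range (n + 1), 1 / (Tr - 1 - j) ^ 2)) := by
          rw [Finset.sum_range_succ, mul_add, Real.exp_add]
          have he : Real.exp (L ^ 2 / 8 * (1 / (Tr - 1 - (n : ℝ)) ^ 2))
              = Real.exp (L ^ 2 / (8 * (Tr - n - 1) ^ 2)) := by
            congr 1
            have hthis : Tr - 1 - (n : ℝ) = Tr - n - 1 := by ring
            rw [hthis, mul_one_div, div_div]
          rw [he]
          linear_combination (-(Real.exp (L ^ 2 / 8 * ∑ j ∈ Finset.range n, 1 / (Tr - 1 - (j:ℝ)) ^ 2) *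
            Real.exp (L ^ 2 / (8 * (Tr - (n:ℝ) - 1) ^ 2)))) * hfac



lemma serfling_vbound (N K : ℕ) (hN : 0 < N) (hK : 0 < K) :
    ∑ j ∈ Finset.range N, 1 / ((N + K : ℝ) - 1 - j) ^ 2
      ≤ (N : ℝ) * (K + 1) / ((N + K) * K ^ 2) := by
  have hKr : (1 : ℝ) ≤ (K : ℝ) := by exact_mod_cast hK
  have hNr : (1 : ℝ) ≤ (N : ℝ) := by exact_mod_cast hN
  set Tr : ℝ := (N + K : ℝ) with hTr
  have hpt : ∀ j ∈ Finset.range N, 1 / (Tr - 1 - (j : ℝ)) ^ 2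
      ≤ ((K : ℝ) + 1) / K * (1 / (Tr - ((j : ℝ) + 1)) - 1 / (Tr - (j : ℝ))) := by
    intro j hj
    rw [Finset.mem_range] at hj
    have hjr : (j : ℝ) + 1 ≤ (N : ℝ) := by exact_mod_cast hj
    set x : ℝ := Tr - 1 - (j : ℝ) with hx
    have hxK : (K : ℝ) ≤ x := by rw [hx, hTr]; linarith
    have hx0 : (0 : ℝ) < x := by linarith
    have hx1 : (0 : ℝ) < x + 1 := by linarith
    have h1 : Tr - ((j : ℝ) + 1) = x := by rw [hx]; ring
    have h2 : Tr - (j : ℝ) = x + 1 := by rw [hx]; ring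
    rw [h1, h2]
    have hdiff : 1 / x - 1 / (x + 1) = 1 / (x * (x + 1)) := by
      field_simp
      ring
    rw [hdiff]
    rw [div_mul_eq_mul_div, mul_one_div, div_div]
    rw [div_le_div_iff₀ (by positivity) (by positivity)]
    nlinarith
  calc ∑ j ∈ Finset.range N, 1 / (Tr - 1 - (j : ℝ)) ^ 2
      ≤ ∑ j ∈ Finset.range N,
          ((K : ℝ) + 1) / K * (1 / (Tr - ((j : ℝ) + 1)) - 1 / (Tr - (j : ℝ))) :=
        Finset.sum_le_sum hpt
    _ = ((K : ℝ) + 1) / K * ∑ j ∈ Finset.range N,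
          ((fun i : ℕ => 1 / (Tr - (i : ℝ))) (j + 1) - (fun i : ℕ => 1 / (Tr - (i : ℝ))) j) := by
        rw [Finset.mul_sum]
        apply Finset.sum_congr rfl
        intro j _
        push_cast
        ring_nf
    _ = ((K : ℝ) + 1) / K * (1 / (Tr - (N : ℝ)) - 1 / (Tr - (0 : ℕ))) := by
        rw [Finset.sum_range_sub (fun i : ℕ => 1 / (Tr - (i : ℝ)))]
    _ = (N : ℝ) * (K + 1) / ((N + K) * K ^ 2) := by
        have hTN : Tr - (N : ℝ) = (K : ℝ) := by rw [hTr]; push_cast; ring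
        have hT0 : Tr - ((0 : ℕ) : ℝ) = Tr := by push_cast; ring
        rw [hTN, hT0, hTr]
        have hK0 : (K : ℝ) ≠ 0 := by linarith
        have hT0' : (N : ℝ) + K ≠ 0 := by linarith
        field_simp
        ring


/-- Serfling's bound: let `Y₁, …, Y_T ∈ {0,1}` with `T = N + K`, and
let `Π` be a uniformly random `K`-subset of `{1, …, T}`, `Π̄` its complement. Then
for any `0 < ν < 1`,
`Pr( Σ_{k∈Π̄} Y_k ≤ (N/K) Σ_{k∈Π} Y_k + Nν ) ≥ 1 − exp(−2ν²NK²/((N+K)(K+1)))`,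
where the probability is the fraction of `K`-subsets satisfying the event. -/
theorem serfling_bound (N K : ℕ) (hN : 0 < N) (hK : 0 < K)
    (Y : Fin (N + K) → ℝ) (hY : ∀ k, Y k = 0 ∨ Y k = 1)
    (ν : ℝ) (hν : 0 < ν) (hν1 : ν < 1)
    (event : Finset (Fin (N + K)) → Prop)
    (hevent : ∀ s, event s ↔
      ∑ k ∈ sᶜ, Y k ≤ (N : ℝ) / K * ∑ k ∈ s, Y k + N * ν)
    [DecidablePred event] :
    ((((Finset.univ : Finset (Fin (N + K))).powersetCard K).filter event).card : ℝ) /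
      ((((Finset.univ : Finset (Fin (N + K))).powersetCard K).card : ℝ)) ≥
      1 - Real.exp (-(2 * ν ^ 2 * N * K ^ 2) / ((N + K) * (K + 1))) := by
  classical
  have hKr : (1 : ℝ) ≤ (K : ℝ) := by exact_mod_cast hK
  have hNr : (1 : ℝ) ≤ (N : ℝ) := by exact_mod_cast hN
  set Tr : ℝ := (N + K : ℝ) with hTr
  have hTr0 : (0 : ℝ) < Tr := by rw [hTr]; linarith
  have hK0 : (0 : ℝ) < (K : ℝ) := by linarith
  set m : ℝ := ∑ i, Y i with hm
  set μ : ℝ := m / Tr with hμ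
  set θ : ℝ := (N : ℝ) * ν / Tr with hθ
  have hθ0 : 0 < θ := by
    rw [hθ]
    apply div_pos _ hTr0
    positivity
  set V : ℝ := ∑ j ∈ Finset.range N, 1 / (Tr - 1 - (j : ℝ)) ^ 2 with hV
  have hV0 : 0 < V := by
    rw [hV]
    apply Finset.sum_pos
    · intro j hj
      rw [Finset.mem_range] at hj
      have hjr : (j : ℝ) + 1 ≤ (N : ℝ) := by exact_mod_cast hj
      have : (0 : ℝ) < Tr - 1 - (j : ℝ) := by rw [hTr]; linarith
      positivity
    · exact ⟨0, Finset.mem_range.mpr hN⟩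
  set L : ℝ := 4 * θ / V with hL
  have hL0 : 0 ≤ L := by
    rw [hL]
    exact div_nonneg (by linarith) hV0.le
  set badN : Finset (Finset (Fin (N + K))) :=
    ((Finset.univ : Finset (Fin (N + K))).powersetCard N).filter
      (fun u => θ ≤ ((∑ i ∈ u, Y i) - (N : ℝ) * μ) / (Tr - (N : ℝ))) with hbadN
  -- Markov / Chernoff bound on badN
  have hmarkov : (badN.card : ℝ) * Real.exp (L * θ)
      ≤ ((N + K).choose N : ℝ) * Real.exp (L ^ 2 / 8 * V) := by
    have hmgf := serfling_mgf N K hN hK Y hY L N le_rfl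
    have h1 : ∀ u ∈ badN, Real.exp (L * θ)
        ≤ Real.exp (L * ((∑ i ∈ u, Y i) - (N : ℝ) * μ) / (Tr - (N : ℝ))) := by
      intro u hu
      rw [hbadN, Finset.mem_filter] at hu
      apply Real.exp_le_exp.2
      rw [mul_div_assoc]
      exact mul_le_mul_of_nonneg_left hu.2 hL0
    calc (badN.card : ℝ) * Real.exp (L * θ)
        ≤ ∑ u ∈ badN, Real.exp (L * ((∑ i ∈ u, Y i) - (N : ℝ) * μ) / (Tr - (N : ℝ))) := by
          have := Finset.card_nsmul_le_sum badN
            (fun u => Real.exp (L * ((∑ i ∈ u, Y i) - (N : ℝ) * μ) / (Tr - (N : ℝ))))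
            (Real.exp (L * θ)) h1
          rwa [nsmul_eq_mul] at this
      _ ≤ ∑ u ∈ (Finset.univ : Finset (Fin (N + K))).powersetCard N,
            Real.exp (L * ((∑ i ∈ u, Y i) - (N : ℝ) * μ) / (Tr - (N : ℝ))) := by
          apply Finset.sum_le_sum_of_subset_of_nonneg (Finset.filter_subset _ _)
          intro u _ _
          exact (Real.exp_pos _).le
      _ ≤ ((N + K).choose N : ℝ) * Real.exp (L ^ 2 / 8 * V) := hmgf
  have hE : (0:ℝ) < Real.exp (L * θ) := Real.exp_pos _
  have hbadN_card : (badN.card : ℝ)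
      ≤ ((N + K).choose N : ℝ) * Real.exp (L ^ 2 / 8 * V - L * θ) := by
    rw [Real.exp_sub, ← mul_div_assoc, le_div_iff₀ hE]
    exact hmarkov
  -- exponent simplification and comparison
  have hexp_eq : L ^ 2 / 8 * V - L * θ = -(2 * θ ^ 2 / V) := by
    rw [hL]
    field_simp
    ring
  have hBle := serfling_vbound N K hN hK
  rw [← hTr, ← hV] at hBle
  have hB0 : (0 : ℝ) < (N : ℝ) * (K + 1) / (Tr * K ^ 2) := by
    apply div_pos
    · nlinarith
    · nlinarith
  have hTrB : (N : ℝ) * ((K : ℝ) + 1) / ((N + K : ℝ) * (K : ℝ) ^ 2)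
      = (N : ℝ) * ((K : ℝ) + 1) / (Tr * (K : ℝ) ^ 2) := by rw [hTr]
  rw [hTrB] at hBle
  have h2θ : 2 * θ ^ 2 / ((N : ℝ) * (K + 1) / (Tr * K ^ 2)) ≤ 2 * θ ^ 2 / V :=
    div_le_div_of_nonneg_left (by positivity) hV0 hBle
  have hEq2 : 2 * θ ^ 2 / ((N : ℝ) * (K + 1) / (Tr * K ^ 2))
      = 2 * ν ^ 2 * (N : ℝ) * (K : ℝ) ^ 2 / (((N : ℝ) + K) * ((K : ℝ) + 1)) := by
    rw [hθ, hTr]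
    field_simp
  have hexp_le : Real.exp (L ^ 2 / 8 * V - L * θ)
      ≤ Real.exp (-(2 * ν ^ 2 * (N : ℝ) * (K : ℝ) ^ 2) / (((N : ℝ) + K) * ((K : ℝ) + 1))) := by
    apply Real.exp_le_exp.2
    rw [hexp_eq, neg_div]
    apply neg_le_neg
    rw [← hEq2]
    exact h2θ
  -- bad K-subsets inject into badN via complement
  set badK : Finset (Finset (Fin (N + K))) :=
    ((Finset.univ : Finset (Fin (N + K))).powersetCard K).filter
      (fun s => ¬ event s) with hbadK
  have hmaps : ∀ s ∈ badK, sᶜ ∈ badN := by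
    intro s hs
    rw [hbadK, Finset.mem_filter, Finset.mem_powersetCard_univ] at hs
    obtain ⟨hcard, hbad⟩ := hs
    rw [hbadN, Finset.mem_filter, Finset.mem_powersetCard_univ]
    constructor
    · rw [Finset.card_compl, Fintype.card_fin, hcard]
      omega
    · rw [hevent s, not_le] at hbad
      set b : ℝ := ∑ k ∈ sᶜ, Y k with hbdef
      set a : ℝ := ∑ k ∈ s, Y k with hadef
      have hab : a + b = m := by
        rw [hadef, hbdef, hm]
        exact Finset.sum_add_sum_compl s Y
      have hTN : Tr - (N : ℝ) = (K : ℝ) := by rw [hTr]; ring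
      rw [hTN]
      rw [le_div_iff₀ hK0]
      -- from hbad : N/K * a + N*ν < b
      have hbad2 : (N : ℝ) * a + (N : ℝ) * ν * K < b * K := by
        have := mul_lt_mul_of_pos_right hbad hK0
        have hdiv : ((N : ℝ) / K * a + (N : ℝ) * ν) * K = (N : ℝ) * a + (N : ℝ) * ν * K := by
          field_simp
        linarith [hdiv ▸ this]
      rw [hθ, hμ]
      rw [div_mul_eq_mul_div, div_le_iff₀ hTr0]
      have hμm : (b - (N : ℝ) * (m / Tr)) * Tr = b * Tr - (N : ℝ) * m := by
        field_simp
      rw [hμm]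
      have ham : a = m - b := by linarith
      have hexp2 : (N : ℝ) * (m - b) = (N : ℝ) * m - (N : ℝ) * b := by ring
      rw [ham, hexp2] at hbad2
      rw [hTr]
      have hgoal2 : b * ((N : ℝ) + (K : ℝ)) = b * (N : ℝ) + b * (K : ℝ) := by ring
      rw [hgoal2]
      have hNb : (N : ℝ) * b = b * (N : ℝ) := by ring
      rw [hNb] at hbad2
      linarith
  have hinj : Set.InjOn (fun s : Finset (Fin (N + K)) => sᶜ) badK := by
    intro s _ t _ h
    simpa using congrArg (fun u : Finset (Fin (N + K)) => uᶜ) h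
  have hcard_le : badK.card ≤ badN.card := Finset.card_le_card_of_injOn _ hmaps hinj
  -- total count
  have hCtot : ((Finset.univ : Finset (Fin (N + K))).powersetCard K).card = (N + K).choose K := by
    rw [Finset.card_powersetCard, Finset.card_univ, Fintype.card_fin]
  have hsymm : (N + K).choose N = (N + K).choose K := by
    have h := Nat.choose_symm (Nat.le_add_left K N)
    simpa [Nat.add_sub_cancel] using h
  have hCpos : (0 : ℝ) < (((Finset.univ : Finset (Fin (N + K))).powersetCard K).card : ℝ) := by
    rw [hCtot]
    exact_mod_cast Nat.choose_pos (Nat.le_add_left K N)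
  -- final arithmetic
  have hsplit := Finset.card_filter_add_card_filter_not
    (s := (Finset.univ : Finset (Fin (N + K))).powersetCard K) (p := event)
  have hgood : (((((Finset.univ : Finset (Fin (N + K))).powersetCard K).filter event).card : ℝ))
      = (((Finset.univ : Finset (Fin (N + K))).powersetCard K).card : ℝ) - (badK.card : ℝ) := by
    rw [hbadK]
    have := hsplit
    push_cast [← this]
    ring
  rw [ge_iff_le, hgood, sub_div, div_self hCpos.ne']
  apply sub_le_sub_left
  rw [div_le_iff₀ hCpos]
  calc (badK.card : ℝ) ≤ (badN.card : ℝ) := by exact_mod_cast hcard_le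
    _ ≤ ((N + K).choose N : ℝ) * Real.exp (L ^ 2 / 8 * V - L * θ) := hbadN_card
    _ ≤ ((N + K).choose N : ℝ) *
          Real.exp (-(2 * ν ^ 2 * (N : ℝ) * (K : ℝ) ^ 2) / (((N : ℝ) + K) * ((K : ℝ) + 1))) := by
        apply mul_le_mul_of_nonneg_left hexp_le (by positivity)
    _ = Real.exp (-(2 * ν ^ 2 * (N : ℝ) * (K : ℝ) ^ 2) / (((N : ℝ) + K) * ((K : ℝ) + 1))) *
          (((Finset.univ : Finset (Fin (N + K))).powersetCard K).card : ℝ) := by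
        rw [hCtot, hsymm]
        ring
end
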